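/- If a and a' are compositions and s is a positive integer such that (a,s) and (a',s) are h-dominating equivalent, then a and a' are h-dominating equivalent. -/

import Mathlib

/-- `l` is a composition of `n`: a list of positive integers summing to `n`. -/
def IsComposition (n : ℕ) (l : List ℕ) : Prop :=
  (∀ x ∈ l, 0 < x) ∧ l.sum = n

/-- `b` dominates `a`: `b` has a subsequence whose terms are entrywise at least those of `a`. -/
def Dominates (b a : List ℕ) : Prop :=
  ∃ b' : List ℕ, b'.Sublist b ∧ List.Forall₂ (· ≤ ·) a b'

/-- `D_n(a)`: the set of compositions of `n` dominating `a`. -/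
def domSet (n : ℕ) (a : List ℕ) : Set (List ℕ) :=
  {b | IsComposition n b ∧ Dominates b a}

/-- `b` h-dominates `a`: `b` dominates `a` and either `b` has one term or
its proper prefix (dropping the last term) does not dominate `a`. -/
def HDominates (b a : List ℕ) : Prop :=
  Dominates b a ∧ (b.length = 1 ∨ ¬ Dominates b.dropLast a)

/-- `D_n^h(a)`: the set of compositions of `n` h-dominating `a`. -/
def hdomSet (n : ℕ) (a : List ℕ) : Set (List ℕ) :=
  {b | IsComposition n b ∧ HDominates b a}

open Finset
open scoped Classical

noncomputable section AuxHdom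

/-- The finset of all compositions of `n`. -/
noncomputable def comps (n : ℕ) : Finset (List ℕ) :=
  (Finset.univ : Finset (Composition n)).image Composition.blocks

lemma mem_comps {n : ℕ} {b : List ℕ} : b ∈ comps n ↔ IsComposition n b := by
  constructor
  · intro hb
    rcases Finset.mem_image.1 hb with ⟨c, -, rfl⟩
    exact ⟨fun x hx => c.blocks_pos hx, c.blocks_sum⟩
  · intro hb
    exact Finset.mem_image.2 ⟨⟨b, fun {i} hi => hb.1 i hi, hb.2⟩, Finset.mem_univ _, rfl⟩

lemma comps_zero : comps 0 = {[]} := by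
  ext b
  simp only [mem_comps, Finset.mem_singleton, IsComposition]
  constructor
  · rintro ⟨hpos, hsum⟩
    cases b with
    | nil => rfl
    | cons x t =>
      exfalso
      have := hpos x (by simp)
      simp [List.sum_cons] at hsum
      omega
  · rintro rfl; simp

lemma comps_decomp {n : ℕ} (hn : 0 < n) :
    comps n = (Finset.range n).biUnion
      (fun m => (comps m).image (fun b => b ++ [n - m])) := by
  ext b
  simp only [Finset.mem_biUnion, Finset.mem_range, Finset.mem_image, mem_comps, IsComposition]
  constructor
  · rintro ⟨hpos, hsum⟩
    have hbne : b ≠ [] := by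
      rintro rfl; simp at hsum; omega
    refine ⟨b.dropLast.sum, ?_, b.dropLast, ⟨?_, rfl⟩, ?_⟩
    · have hlast : 0 < b.getLast hbne := hpos _ (List.getLast_mem hbne)
      have := List.dropLast_append_getLast hbne
      have hsum2 : b.dropLast.sum + b.getLast hbne = n := by
        rw [← hsum]
        conv_rhs => rw [← this]
        simp
      omega
    · exact fun x hx => hpos x (List.dropLast_sublist b |>.mem hx)
    · have hthis := List.dropLast_append_getLast hbne
      have hsum2 : b.dropLast.sum + b.getLast hbne = n := by
        rw [← hsum]
        conv_rhs => rw [← hthis]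
        simp
      rw [show n - b.dropLast.sum = b.getLast hbne from by omega]
      exact hthis
  · rintro ⟨m, hm, c, ⟨hpos, hsum⟩, rfl⟩
    constructor
    · intro x hx
      rcases List.mem_append.1 hx with hx | hx
      · exact hpos x hx
      · simp at hx; omega
    · simp [hsum]; omega

lemma card_filter_comps {n : ℕ} (hn : 0 < n) (P : List ℕ → Prop) :
    ((comps n).filter P).card
      = ∑ m ∈ Finset.range n, ((comps m).filter (fun b => P (b ++ [n - m]))).card := by
  rw [comps_decomp hn, Finset.filter_biUnion]
  rw [Finset.card_biUnion]
  · refine Finset.sum_congr rfl fun m hm => ?_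
    rw [Finset.filter_image]
    rw [Finset.card_image_of_injective]
    intro x y hxy
    simpa using congrArg List.dropLast hxy
  · intro x hx y hy hxy
    simp only [Finset.disjoint_left]
    intro b hb hb'
    apply hxy
    rcases Finset.mem_filter.1 hb with ⟨hb, -⟩
    rcases Finset.mem_filter.1 hb' with ⟨hb', -⟩
    rcases Finset.mem_image.1 hb with ⟨c, hc, rfl⟩
    rcases Finset.mem_image.1 hb' with ⟨c', hc', he⟩
    have h1 : c'.sum = c.sum := by
      have := congrArg List.dropLast he
      simp only [List.dropLast_concat] at this
      rw [this]
    have hc2 := (mem_comps.1 hc).2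
    have hc2' := (mem_comps.1 hc').2
    omega

lemma dominates_nil_iff {x : List ℕ} : Dominates [] x ↔ x = [] := by
  constructor
  · rintro ⟨w, hw, hf⟩
    have hwnil : w = [] := List.sublist_nil.1 hw
    subst hwnil
    cases hf
    rfl
  · rintro rfl; exact ⟨[], List.Sublist.refl _, List.Forall₂.nil⟩

lemma dominates_of_sublist {b c x : List ℕ} (h : Dominates b x) (hbc : b.Sublist c) :
    Dominates c x := by
  rcases h with ⟨w, hw, hf⟩
  exact ⟨w, hw.trans hbc, hf⟩

lemma Dominates.dropLast {b x : List ℕ} (h : Dominates b x) : Dominates b x.dropLast := by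
  rcases h with ⟨w, hw, hf⟩
  refine ⟨w.dropLast, (List.dropLast_sublist w).trans hw, ?_⟩
  have hlen := List.Forall₂.length_eq hf
  rw [List.dropLast_eq_take, List.dropLast_eq_take, hlen]
  exact List.forall₂_take _ hf

lemma forall₂_concat {R : ℕ → ℕ → Prop} {xs ys : List ℕ} {x y : ℕ} :
    List.Forall₂ R (xs ++ [x]) (ys ++ [y]) ↔ List.Forall₂ R xs ys ∧ R x y := by
  rw [← List.forall₂_reverse_iff]
  simp only [List.reverse_append, List.reverse_singleton, List.singleton_append,
    List.forall₂_cons, List.forall₂_reverse_iff]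
  tauto

lemma dominates_concat_iff {b : List ℕ} {t : ℕ} {y : List ℕ} {z : ℕ} :
    Dominates (b ++ [t]) (y ++ [z]) ↔ Dominates b (y ++ [z]) ∨ (z ≤ t ∧ Dominates b y) := by
  constructor
  · rintro ⟨w, hw, hf⟩
    rcases List.sublist_append_iff.1 hw with ⟨w₁, w₂, rfl, hw₁, hw₂⟩
    rcases List.sublist_singleton.1 hw₂ with rfl | rfl
    · left
      exact ⟨w₁, by simpa using hw₁, by simpa using hf⟩
    · right
      rcases forall₂_concat.1 hf with ⟨hf₁, hzt⟩
      exact ⟨hzt, w₁, hw₁, hf₁⟩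
  · rintro (h | ⟨hzt, w, hw, hf⟩)
    · exact dominates_of_sublist h (List.sublist_append_left _ _)
    · exact ⟨w ++ [t], hw.append (List.Sublist.refl _), forall₂_concat.2 ⟨hf, hzt⟩⟩

lemma dominates_concat_drop {b y : List ℕ} {z : ℕ} (h : Dominates b (y ++ [z])) :
    Dominates b y := by
  have := h.dropLast
  rwa [List.dropLast_concat] at this

lemma hdominates_concat_iff {b : List ℕ} {t : ℕ} {y : List ℕ} {z : ℕ} :
    HDominates (b ++ [t]) (y ++ [z]) ↔ z ≤ t ∧ Dominates b y ∧ ¬ Dominates b (y ++ [z]) := by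
  rcases eq_or_ne b [] with rfl | hb
  · simp only [List.nil_append, HDominates]
    have h1 : Dominates [t] (y ++ [z]) ↔ z ≤ t ∧ Dominates [] y := by
      have := dominates_concat_iff (b := []) (t := t) (y := y) (z := z)
      simp only [List.nil_append] at this
      rw [this]
      have : ¬ Dominates [] (y ++ [z]) := by
        rw [dominates_nil_iff]; simp
      tauto
    have h2 : ¬ Dominates [] (y ++ [z]) := by rw [dominates_nil_iff]; simp
    simp only [List.length_singleton]
    rw [h1]
    tauto
  · have hd : (b ++ [t]).dropLast = b := List.dropLast_concat
    have hl : (b ++ [t]).length ≠ 1 := by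
      simp only [List.length_append, List.length_singleton]
      have : 0 < b.length := List.length_pos_iff.2 hb
      omega
    unfold HDominates
    rw [hd, dominates_concat_iff]
    constructor
    · rintro ⟨hdom, h1 | h2⟩
      · exact absurd h1 hl
      · rcases hdom with h | ⟨hzt, hy⟩
        · exact absurd h h2
        · exact ⟨hzt, hy, h2⟩
    · rintro ⟨hzt, hy, hn⟩
      exact ⟨Or.inr ⟨hzt, hy⟩, Or.inr hn⟩

/-- Number of compositions of `n` dominating `x`. -/
noncomputable def Fc (n : ℕ) (x : List ℕ) : ℕ :=
  ((comps n).filter (fun b => Dominates b x)).card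

/-- Number of compositions of `n` h-dominating `x`. -/
noncomputable def Hc (n : ℕ) (x : List ℕ) : ℕ :=
  ((comps n).filter (fun b => HDominates b x)).card

lemma hdomSet_ncard (n : ℕ) (x : List ℕ) : (hdomSet n x).ncard = Hc n x := by
  have : hdomSet n x = ↑((comps n).filter (fun b => HDominates b x)) := by
    ext b
    simp only [hdomSet, Set.mem_setOf_eq, Finset.coe_filter, mem_comps]
  rw [this, Set.ncard_coe_finset, Hc]

lemma Fc_mono (n : ℕ) (y : List ℕ) (z : ℕ) : Fc n (y ++ [z]) ≤ Fc n y := by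
  apply Finset.card_le_card
  apply Finset.monotone_filter_right
  intro b _ hb
  exact dominates_concat_drop hb

lemma Fc_zero {x : List ℕ} (hx : x ≠ []) : Fc 0 x = 0 := by
  unfold Fc
  rw [comps_zero]
  rw [Finset.card_eq_zero]
  ext b
  simp only [Finset.mem_filter, Finset.mem_singleton, Finset.notMem_empty, iff_false, not_and]
  rintro rfl hdom
  exact hx (dominates_nil_iff.1 hdom)

lemma Fc_sum {n : ℕ} (hn : 0 < n) (y : List ℕ) (z : ℕ) :
    Fc n (y ++ [z]) = ∑ m ∈ Finset.range n,
      (if z ≤ n - m then Fc m y else Fc m (y ++ [z])) := by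
  unfold Fc
  rw [card_filter_comps hn]
  refine Finset.sum_congr rfl fun m hm => ?_
  split_ifs with hc
  · congr 1
    apply Finset.filter_congr
    intro b hb
    rw [dominates_concat_iff]
    constructor
    · rintro (h | ⟨-, h⟩)
      · exact dominates_concat_drop h
      · exact h
    · intro h; exact Or.inr ⟨hc, h⟩
  · congr 1
    apply Finset.filter_congr
    intro b hb
    rw [dominates_concat_iff]
    tauto

lemma Hc_sum {n : ℕ} (hn : 0 < n) (y : List ℕ) (z : ℕ) :
    Hc n (y ++ [z]) = ∑ m ∈ Finset.range n,
      (if z ≤ n - m then Fc m y - Fc m (y ++ [z]) else 0) := by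
  unfold Hc
  rw [card_filter_comps hn]
  refine Finset.sum_congr rfl fun m hm => ?_
  split_ifs with hc
  · have hset : (comps m).filter (fun b => HDominates (b ++ [n - m]) (y ++ [z]))
        = (comps m).filter (fun b => Dominates b y)
          \ (comps m).filter (fun b => Dominates b (y ++ [z])) := by
      ext b
      simp only [Finset.mem_filter, Finset.mem_sdiff, hdominates_concat_iff]
      tauto
    have hsub : (comps m).filter (fun b => Dominates b (y ++ [z]))
        ⊆ (comps m).filter (fun b => Dominates b y) := by
      apply Finset.monotone_filter_right
      intro b _ hb
      exact dominates_concat_drop hb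
    rw [hset, Finset.card_sdiff_of_subset hsub]
    rfl
  · rw [Finset.card_eq_zero]
    ext b
    simp only [Finset.mem_filter, Finset.notMem_empty, iff_false, not_and]
    intro hb hdom
    exact hc (hdominates_concat_iff.1 hdom).1

lemma Fc_rec {n : ℕ} (hn : 0 < n) (y : List ℕ) (z : ℕ) :
    Fc n (y ++ [z]) = Hc n (y ++ [z]) + ∑ m ∈ Finset.range n, Fc m (y ++ [z]) := by
  rw [Fc_sum hn y z, Hc_sum hn y z, ← Finset.sum_add_distrib]
  refine Finset.sum_congr rfl fun m hm => ?_
  have := Fc_mono m y z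
  split_ifs with hc <;> omega

end AuxHdom

theorem hdomEquiv_of_append (a a' : List ℕ)
    (ha : ∀ x ∈ a, 0 < x) (ha' : ∀ x ∈ a', 0 < x)
    (hane : a ≠ []) (ha'ne : a' ≠ []) (s : ℕ) (hs : 0 < s)
    (h : ∀ n : ℕ, 0 < n →
      (hdomSet n (a ++ [s])).ncard = (hdomSet n (a' ++ [s])).ncard) :
    ∀ n : ℕ, 0 < n → (hdomSet n a).ncard = (hdomSet n a').ncard := by
  -- translate hypothesis to Hc
  have hH : ∀ n : ℕ, Hc n (a ++ [s]) = Hc n (a' ++ [s]) := by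
    intro n
    rcases Nat.eq_zero_or_pos n with rfl | hn
    · -- n = 0 : both are 0
      unfold Hc
      rw [comps_zero]
      congr 1
      ext b
      simp only [Finset.mem_filter, Finset.mem_singleton]
      constructor <;> rintro ⟨rfl, hdom, -⟩ <;>
        exact absurd (dominates_nil_iff.1 hdom) (by simp)
    · have := h n hn
      rwa [hdomSet_ncard, hdomSet_ncard] at this
  -- Step 1: Fc n (a++[s]) = Fc n (a'++[s]) for all n
  have hF : ∀ n : ℕ, Fc n (a ++ [s]) = Fc n (a' ++ [s]) := by
    intro n
    induction n using Nat.strong_induction_on with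
    | _ n ih =>
      rcases Nat.eq_zero_or_pos n with rfl | hn
      · rw [Fc_zero (by simp), Fc_zero (by simp)]
      · rw [Fc_rec hn, Fc_rec hn, hH n]
        congr 1
        exact Finset.sum_congr rfl fun m hm => ih m (Finset.mem_range.1 hm)
  -- Step 2: Fc m a = Fc m a' for all m
  have hFa : ∀ m : ℕ, Fc m a = Fc m a' := by
    intro m
    induction m using Nat.strong_induction_on with
    | _ m ih =>
      have hn : 0 < m + s := by omega
      have e1 := Hc_sum hn a s
      have e2 := Hc_sum hn a' s
      have hcond : ∀ j ∈ Finset.range (m + s),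
          (if s ≤ m + s - j then Fc j a - Fc j (a ++ [s]) else 0)
            = (if j ≤ m then Fc j a - Fc j (a ++ [s]) else 0) := by
        intro j hj
        have hj' := Finset.mem_range.1 hj
        congr 1
        simp only [eq_iff_iff]
        omega
      have hcond' : ∀ j ∈ Finset.range (m + s),
          (if s ≤ m + s - j then Fc j a' - Fc j (a' ++ [s]) else 0)
            = (if j ≤ m then Fc j a' - Fc j (a' ++ [s]) else 0) := by
        intro j hj
        have hj' := Finset.mem_range.1 hj
        congr 1
        simp only [eq_iff_iff]
        omega
      rw [Finset.sum_congr rfl hcond] at e1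
      rw [Finset.sum_congr rfl hcond'] at e2
      have hrange : ∀ (g : ℕ → ℕ),
          ∑ j ∈ Finset.range (m + s), (if j ≤ m then g j else 0)
            = ∑ j ∈ Finset.range (m + 1), g j := by
        intro g
        rw [← Finset.sum_filter]
        congr 1
        ext j
        simp only [Finset.mem_filter, Finset.mem_range]
        omega
      rw [hrange] at e1
      rw [hrange] at e2
      -- e1 : Hc (m+s) (a++[s]) = ∑_{j≤m} (Fc j a - Fc j (a++[s]))
      have key : ∑ j ∈ Finset.range (m + 1), (Fc j a - Fc j (a ++ [s]))
          = ∑ j ∈ Finset.range (m + 1), (Fc j a' - Fc j (a' ++ [s])) := by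
        rw [← e1, ← e2, hH]
      rw [Finset.sum_range_succ, Finset.sum_range_succ] at key
      have hsum_eq : ∑ j ∈ Finset.range m, (Fc j a - Fc j (a ++ [s]))
          = ∑ j ∈ Finset.range m, (Fc j a' - Fc j (a' ++ [s])) := by
        refine Finset.sum_congr rfl fun j hj => ?_
        rw [ih j (Finset.mem_range.1 hj), hF j]
      rw [hsum_eq] at key
      have hlast : Fc m a - Fc m (a ++ [s]) = Fc m a' - Fc m (a' ++ [s]) := by omega
      have h1 := Fc_mono m a s
      have h2 := Fc_mono m a' s
      have h3 := hF m
      omega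
  -- Step 3: Hc n a = Hc n a' for n > 0
  intro n hn
  rw [hdomSet_ncard, hdomSet_ncard]
  obtain ⟨y, z, rfl⟩ : ∃ y z, a = y ++ [z] :=
    ⟨a.dropLast, a.getLast hane, (List.dropLast_append_getLast hane).symm⟩
  obtain ⟨y', z', rfl⟩ : ∃ y z, a' = y ++ [z] :=
    ⟨a'.dropLast, a'.getLast ha'ne, (List.dropLast_append_getLast ha'ne).symm⟩
  have e1 := Fc_rec hn y z
  have e2 := Fc_rec hn y' z'
  have h3 := hFa n
  have h4 : ∑ m ∈ Finset.range n, Fc m (y ++ [z]) = ∑ m ∈ Finset.range n, Fc m (y' ++ [z']) :=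
    Finset.sum_congr rfl fun m _ => hFa m
  omega
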